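/- Let R = A + U* and S = B + V* be hyperlinear subsets of ℕ^m, and J the set of strongly unbounded coordinates for R and S. If R and S are not separable by a recognizable subset of ℕ^m, then the intersection (A + U* − U_J*) ∩ (B + V* − V_J*) in ℤ^m is non-empty. -/

import Mathlib

/-- `P*`: all finite `ℕ`-linear combinations of elements of `P`. -/
def nstar {m : ℕ} (P : Set (Fin m → ℕ)) : Set (Fin m → ℕ) :=
  (AddSubmonoid.closure P : Set (Fin m → ℕ))

/-- Support of a vector. -/
def supp {m : ℕ} (v : Fin m → ℕ) : Set (Fin m) := {i | v i ≠ 0}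

/-- `U_J = {p ∈ U : supp p ⊆ J}`. -/
def restrictTo {m : ℕ} (U : Set (Fin m → ℕ)) (J : Set (Fin m)) : Set (Fin m → ℕ) :=
  {p ∈ U | supp p ⊆ J}

/-- A coordinate `j` is strongly unbounded for `A + U*` and `B + V*` if there are
`p ∈ U*`, `q ∈ V*` with `j ∈ supp p = supp q`. -/
def StronglyUnbounded {m : ℕ} (U V : Set (Fin m → ℕ)) (j : Fin m) : Prop :=
  ∃ p ∈ nstar U, ∃ q ∈ nstar V, j ∈ supp p ∧ supp p = supp q

/-- Coercion of a vector of naturals to a vector of integers. -/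
def toInt {m : ℕ} (v : Fin m → ℕ) : Fin m → ℤ := fun i => (v i : ℤ)

/-- `U ⊆ ℕ` is ultimately periodic. -/
def UltPeriodic (U : Set ℕ) : Prop :=
  ∃ n0 p : ℕ, 1 ≤ p ∧ ∀ n ≥ n0, (n ∈ U ↔ n + p ∈ U)

/-- A subset of `ℕ^m` is recognizable if it is a finite union of products
of ultimately periodic subsets of `ℕ`. -/
def Recognizable {m : ℕ} (S : Set (Fin m → ℕ)) : Prop :=
  ∃ (n : ℕ) (U : Fin n → Fin m → Set ℕ),
    (∀ j i, UltPeriodic (U j i)) ∧ S = ⋃ j, {v | ∀ i, v i ∈ U j i}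

set_option maxHeartbeats 4000000
set_option linter.unusedVariables false

open scoped Classical

lemma toInt_add {m : ℕ} (u v : Fin m → ℕ) : toInt (u + v) = toInt u + toInt v := by
  funext i; simp [toInt]

lemma toInt_nsmul {m : ℕ} (n : ℕ) (u : Fin m → ℕ) : toInt (n • u) = (n : ℤ) • toInt u := by
  funext i; simp [toInt, mul_comm]







section basic
variable {m : ℕ} {U V J : Set (Fin m → ℕ)}

lemma zero_mem_nstar (U : Set (Fin m → ℕ)) : 0 ∈ nstar U := (AddSubmonoid.closure U).zero_mem

lemma add_mem_nstar {u v : Fin m → ℕ} (hu : u ∈ nstar U) (hv : v ∈ nstar U) :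
    u + v ∈ nstar U := (AddSubmonoid.closure U).add_mem hu hv

lemma nsmul_mem_nstar {u : Fin m → ℕ} (hu : u ∈ nstar U) (n : ℕ) :
    n • u ∈ nstar U := (AddSubmonoid.closure U).nsmul_mem hu n

lemma nstar_mono {U' : Set (Fin m → ℕ)} (h : U ⊆ U') : nstar U ⊆ nstar U' :=
  AddSubmonoid.closure_mono h

lemma mem_nstar_iff {u : Fin m → ℕ} :
    u ∈ nstar U ↔ ∃ l : Multiset (Fin m → ℕ), (∀ g ∈ l, g ∈ U) ∧ l.sum = u := by
  constructor
  · intro h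
    induction h using AddSubmonoid.closure_induction with
    | mem g hg => exact ⟨{g}, by simpa using hg, by simp⟩
    | zero => exact ⟨0, by simp, by simp⟩
    | add a b _ _ iha ihb =>
      obtain ⟨l1, hl1, rfl⟩ := iha
      obtain ⟨l2, hl2, rfl⟩ := ihb
      refine ⟨l1 + l2, ?_, by simp⟩
      intro g hg
      rcases Multiset.mem_add.1 hg with h | h
      exacts [hl1 g h, hl2 g h]
  · rintro ⟨l, hl, rfl⟩
    exact multiset_sum_mem l (fun g hg => AddSubmonoid.subset_closure (hl g hg))

lemma le_of_mem_sum {l : Multiset (Fin m → ℕ)} {g : Fin m → ℕ} (hg : g ∈ l) (i : Fin m) :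
    g i ≤ l.sum i := by
  obtain ⟨l', rfl⟩ := Multiset.exists_cons_of_mem hg
  simp [Pi.add_apply]

lemma mem_nstar_restrict {u : Fin m → ℕ} {Js : Set (Fin m)} (hu : u ∈ nstar U)
    (hsupp : supp u ⊆ Js) : u ∈ nstar (restrictTo U Js) := by
  obtain ⟨l, hl, rfl⟩ := mem_nstar_iff.1 hu
  apply mem_nstar_iff.2
  refine ⟨l, fun g hg => ⟨hl g hg, fun i hi => hsupp ?_⟩, rfl⟩
  exact fun h0 => hi (Nat.eq_zero_of_le_zero (h0 ▸ le_of_mem_sum hg i))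

lemma supp_add {u v : Fin m → ℕ} : supp (u + v) = supp u ∪ supp v := by
  ext i; simp [supp, Pi.add_apply, Nat.add_eq_zero, not_and_or]; tauto



end basic



section key
variable {m : ℕ} {U V : Set (Fin m → ℕ)} {Jc : Set (Fin m)}

lemma key_supp (hJw : ∀ j, j ∈ Jc → StronglyUnbounded U V j)
    (hJc : ∀ j, StronglyUnbounded U V j → j ∈ Jc)
    {u v : Fin m → ℕ} (hu : u ∈ nstar U) (hv : v ∈ nstar V)
    (hoff : ∀ i, i ∉ Jc → u i = v i) : supp u ⊆ Jc ∧ supp v ⊆ Jc := by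
  have hw : ∀ j : Fin m, ∃ p q : Fin m → ℕ,
      j ∈ Jc → p ∈ nstar U ∧ q ∈ nstar V ∧ j ∈ supp p ∧ supp p = supp q := by
    intro j
    by_cases h : j ∈ Jc
    · obtain ⟨p, hp, q, hq, hjp, hpq⟩ := hJw j h
      exact ⟨p, q, fun _ => ⟨hp, hq, hjp, hpq⟩⟩
    · exact ⟨0, 0, fun hh => absurd hh h⟩
  choose p q hpq using hw
  set K : Finset (Fin m) := Finset.univ.filter (fun j => j ∈ Jc ∧ (u j ≠ 0 ∨ v j ≠ 0)) with hK
  have hKmem : ∀ j, j ∈ K ↔ (j ∈ Jc ∧ (u j ≠ 0 ∨ v j ≠ 0)) := by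
    intro j; simp [hK]
  set P : Fin m → ℕ := u + ∑ j ∈ K, p j with hPdef
  set Q : Fin m → ℕ := v + ∑ j ∈ K, q j with hQdef
  have hP : P ∈ nstar U :=
    (AddSubmonoid.closure U).add_mem hu
      ((AddSubmonoid.closure U).sum_mem fun j hj => (hpq j ((hKmem j).1 hj).1).1)
  have hQ : Q ∈ nstar V :=
    (AddSubmonoid.closure V).add_mem hv
      ((AddSubmonoid.closure V).sum_mem fun j hj => (hpq j ((hKmem j).1 hj).1).2.1)
  have hsum : ∀ i, (∑ j ∈ K, p j) i ≠ 0 ↔ (∑ j ∈ K, q j) i ≠ 0 := by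
    intro i
    rw [Finset.sum_apply, Finset.sum_apply]
    rw [not_iff_not]
    rw [Finset.sum_eq_zero_iff, Finset.sum_eq_zero_iff]
    apply forall_congr'; intro j
    apply imp_congr_right; intro hj
    have hs := (hpq j ((hKmem j).1 hj).1).2.2.2
    have : (j_1 : Prop) → True := fun _ => trivial
    constructor
    · intro h0
      by_contra hq0
      have : i ∈ supp (q j) := hq0
      rw [← hs] at this
      exact this h0
    · intro h0
      by_contra hp0
      have : i ∈ supp (p j) := hp0
      rw [hs] at this
      exact this h0
  have hPQ : ∀ i, (P i ≠ 0 ↔ Q i ≠ 0) := by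
    intro i
    have hPi : P i = u i + (∑ j ∈ K, p j) i := rfl
    have hQi : Q i = v i + (∑ j ∈ K, q j) i := rfl
    rw [hPi, hQi]
    by_cases hiJ : i ∈ Jc
    · by_cases huv : u i ≠ 0 ∨ v i ≠ 0
      · have hiK : i ∈ K := (hKmem i).2 ⟨hiJ, huv⟩
        have hpii : p i i ≠ 0 := (hpq i hiJ).2.2.1
        have hqii : q i i ≠ 0 := by
          have hs := (hpq i hiJ).2.2.2
          have : i ∈ supp (p i) := hpii
          rw [hs] at this; exact this
        have h1 : (∑ j ∈ K, p j) i ≠ 0 := by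
          rw [Finset.sum_apply]
          intro h0
          exact hpii ((Finset.sum_eq_zero_iff.1 h0) i hiK)
        have h2 : (∑ j ∈ K, q j) i ≠ 0 := by
          rw [Finset.sum_apply]
          intro h0
          exact hqii ((Finset.sum_eq_zero_iff.1 h0) i hiK)
        constructor
        · intro _; simp [Nat.add_eq_zero]; tauto
        · intro _; simp [Nat.add_eq_zero]; tauto
      · push_neg at huv
        simp only [ne_eq, Nat.add_eq_zero, not_and_or, huv.1, huv.2, not_true_eq_false,
          false_or]
        exact hsum i
    · simp only [ne_eq, Nat.add_eq_zero, not_and_or]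
      exact or_congr (by rw [hoff i hiJ]) (hsum i)
  have hsuppPQ : supp P = supp Q := Set.ext fun i => hPQ i
  constructor
  · intro i hi
    apply hJc
    refine ⟨P, hP, Q, hQ, ?_, hsuppPQ⟩
    show P i ≠ 0
    have : P i = u i + (∑ j ∈ K, p j) i := rfl
    rw [this]
    simp only [ne_eq, Nat.add_eq_zero, not_and_or]
    exact Or.inl hi
  · intro i hi
    apply hJc
    refine ⟨P, hP, Q, hQ, ?_, hsuppPQ⟩
    rw [hsuppPQ]
    show Q i ≠ 0
    have : Q i = v i + (∑ j ∈ K, q j) i := rfl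
    rw [this]
    simp only [ne_eq, Nat.add_eq_zero, not_and_or]
    exact Or.inl hi

end key

section Lchoice
variable {m : ℕ}

/-- the saturation of a submodule of `ℤ^m` -/
def satur (H : Submodule ℤ (Fin m → ℤ)) : Submodule ℤ (Fin m → ℤ) where
  carrier := {x | ∃ n : ℕ, 0 < n ∧ (n : ℤ) • x ∈ H}
  zero_mem' := ⟨1, one_pos, by simpa using H.zero_mem⟩
  add_mem' := by
    rintro x y ⟨n, hn, hx⟩ ⟨k, hk, hy⟩
    refine ⟨n * k, Nat.mul_pos hn hk, ?_⟩
    have : ((n * k : ℕ) : ℤ) • (x + y) = (k : ℤ) • ((n : ℤ) • x) + (n : ℤ) • ((k : ℤ) • y) := by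
      push_cast; module
    rw [this]
    exact H.add_mem (H.smul_mem _ hx) (H.smul_mem _ hy)
  smul_mem' := by
    rintro c x ⟨n, hn, hx⟩
    exact ⟨n, hn, by rw [smul_comm]; exact H.smul_mem c hx⟩

lemma le_satur (H : Submodule ℤ (Fin m → ℤ)) : H ≤ satur H :=
  fun x hx => ⟨1, one_pos, by simpa using hx⟩

lemma exists_bound (H : Submodule ℤ (Fin m → ℤ)) :
    ∃ N : ℕ, 0 < N ∧ ∀ x ∈ satur H, ((N : ℤ)) • x ∈ H := by
  have hfg : (satur H).FG := IsNoetherian.noetherian _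
  obtain ⟨T, hT⟩ := hfg
  have hmem : ∀ t : Fin m → ℤ, t ∈ T → t ∈ satur H := by
    intro t ht
    rw [← hT]; exact Submodule.subset_span ht
  have hwit : ∀ t : Fin m → ℤ, ∃ n : ℕ, t ∈ T → (0 < n ∧ (n : ℤ) • t ∈ H) := by
    intro t
    by_cases ht : t ∈ T
    · obtain ⟨n, hn, h⟩ := hmem t ht
      exact ⟨n, fun _ => ⟨hn, h⟩⟩
    · exact ⟨1, fun h => absurd h ht⟩
  choose n hn using hwit
  refine ⟨∏ t ∈ T, n t, Finset.prod_pos (fun t ht => (hn t ht).1), ?_⟩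
  intro x hx
  rw [← hT] at hx
  induction hx using Submodule.span_induction with
  | mem t ht =>
    obtain ⟨k, hk⟩ := Finset.dvd_prod_of_mem n ht
    rw [hk]
    have : (((n t * k : ℕ)) : ℤ) • t = (k : ℤ) • ((n t : ℤ) • t) := by push_cast; module
    rw [this]
    exact H.smul_mem _ (hn t ht).2
  | zero => simpa using H.zero_mem
  | add a b _ _ iha ihb => rw [smul_add]; exact H.add_mem iha ihb
  | smul c a _ iha => rw [smul_comm]; exact H.smul_mem c iha

lemma exists_functional (H : Submodule ℤ (Fin m → ℤ)) {φ : Fin m → ℤ} (hφ : φ ∉ satur H) :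
    ∃ ψ : (Fin m → ℤ) →ₗ[ℤ] ℤ, (∀ x ∈ satur H, ψ x = 0) ∧ ψ φ ≠ 0 := by
  set S := satur H
  let M' := (Fin m → ℤ) ⧸ S
  have hfin : Module.Finite ℤ M' := Module.Finite.of_surjective S.mkQ (Submodule.mkQ_surjective S)
  have htf : NoZeroSMulDivisors ℤ M' := by
    constructor
    intro c x h
    by_cases hc : c = 0
    · exact Or.inl hc
    · right
      obtain ⟨y, rfl⟩ := Submodule.mkQ_surjective S x
      have hcy : c • y ∈ S := by
        rw [← Submodule.Quotient.mk_eq_zero (p := S)]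
        have : (Submodule.Quotient.mk (c • y) : M') = c • S.mkQ y := by
          rw [← Submodule.mkQ_apply, map_smul]
        rw [this, h]
      obtain ⟨k, hk, hky⟩ := hcy
      rw [Submodule.mkQ_apply, Submodule.Quotient.mk_eq_zero]
      refine ⟨k * c.natAbs, Nat.mul_pos hk (Int.natAbs_pos.2 hc), ?_⟩
      have hstep : ((k * c.natAbs : ℕ) : ℤ) • y = (k : ℤ) • ((c.natAbs : ℤ) • y) := by
        rw [Nat.cast_mul, mul_smul]
      rcases Int.natAbs_eq c with h1 | h1
      · rw [hstep, ← h1]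
        exact hky
      · have h2 : ((c.natAbs : ℤ)) = -c := by omega
        rw [hstep, h2, neg_smul, smul_neg]
        exact H.neg_mem hky
  obtain ⟨n, b⟩ := Module.basisOfFiniteTypeTorsionFree' (R := ℤ) (M := M')
  have hφ' : S.mkQ φ ≠ 0 := by
    rw [Submodule.mkQ_apply, ne_eq, Submodule.Quotient.mk_eq_zero]
    exact hφ
  have : ∃ i, b.repr (S.mkQ φ) i ≠ 0 := by
    by_contra h
    push_neg at h
    apply hφ'
    have : b.repr (S.mkQ φ) = 0 := Finsupp.ext h
    exact b.repr.map_eq_zero_iff.1 this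
  obtain ⟨i, hi⟩ := this
  refine ⟨(b.coord i).comp S.mkQ, ?_, hi⟩
  intro x hx
  have h0 : S.mkQ x = 0 := by
    rw [Submodule.mkQ_apply, Submodule.Quotient.mk_eq_zero]; exact hx
  simp only [LinearMap.comp_apply, h0, map_zero]

lemma exists_good_L (H : Submodule ℤ (Fin m → ℤ)) (Φ : Set (Fin m → ℤ)) (hΦ : Φ.Finite) :
    ∃ L : ℕ, 0 < L ∧ ∀ φ ∈ Φ, ∀ d : Fin m → ℤ, d - φ ∈ H → (∀ i, (L : ℤ) ∣ d i) → d ∈ H := by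
  classical
  obtain ⟨N, hN, hNs⟩ := exists_bound H
  have hψ : ∀ φ : Fin m → ℤ, ∃ ψ : (Fin m → ℤ) →ₗ[ℤ] ℤ,
      φ ∉ satur H → ((∀ x ∈ satur H, ψ x = 0) ∧ ψ φ ≠ 0) := by
    intro φ
    by_cases h : φ ∈ satur H
    · exact ⟨0, fun hh => absurd h hh⟩
    · obtain ⟨ψ, h1, h2⟩ := exists_functional H h
      exact ⟨ψ, fun _ => ⟨h1, h2⟩⟩
  choose ψ hψp using hψ
  set Φf := hΦ.toFinset with hΦf
  refine ⟨N * ∏ φ ∈ Φf, ((ψ φ φ).natAbs + 1), by positivity, ?_⟩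
  intro φ hφ d hdφ hdiv
  -- d = L • d'
  set L : ℕ := N * ∏ φ ∈ Φf, ((ψ φ φ).natAbs + 1) with hLdef
  have hL : ∀ i, (L : ℤ) ∣ d i := hdiv
  have hdd : ∃ d' : Fin m → ℤ, d = (L : ℤ) • d' := by
    refine ⟨fun i => d i / (L : ℤ), ?_⟩
    funext i
    simp only [Pi.smul_apply, smul_eq_mul]
    exact (Int.mul_ediv_cancel' (hL i)).symm
  obtain ⟨d', hd'⟩ := hdd
  by_cases hsat : φ ∈ satur H
  · -- then d ∈ satur H and N ∣ L gives d ∈ H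
    have hdS : d ∈ satur H := by
      have : d = (d - φ) + φ := by ring
      rw [this]
      exact (satur H).add_mem (le_satur H hdφ) hsat
    have hd'S : d' ∈ satur H := by
      obtain ⟨k, hk, hkd⟩ := hdS
      refine ⟨k * L, by positivity, ?_⟩
      have : ((k * L : ℕ) : ℤ) • d' = (k : ℤ) • d := by rw [hd']; push_cast; module
      rw [this]
      exact hkd
    have : d = (N : ℤ) • ((∏ φ ∈ Φf, ((ψ φ φ).natAbs + 1) : ℕ) : ℤ) • d' := by
      rw [hd', hLdef]; push_cast; module
    rw [this]
    exact hNs _ ((satur H).smul_mem _ hd'S)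
  · -- functional contradiction
    exfalso
    obtain ⟨hvanish, hnz⟩ := hψp φ hsat
    have h1 : ψ φ d = ψ φ φ := by
      have : d = (d - φ) + φ := by ring
      rw [this, map_add]
      rw [hvanish _ (le_satur H hdφ)]
      ring
    have h2 : ψ φ d = (L : ℤ) * ψ φ d' := by
      rw [hd', map_smul, smul_eq_mul]
    have hfac : (((ψ φ φ).natAbs + 1 : ℕ)) ∣ L := by
      apply Dvd.dvd.mul_left
      exact Finset.dvd_prod_of_mem _ (hΦ.mem_toFinset.2 hφ)
    have hval : ψ φ φ = (L : ℤ) * ψ φ d' := by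
      rw [← h1]; exact h2
    have hdvd : (((ψ φ φ).natAbs + 1 : ℕ) : ℤ) ∣ ψ φ φ := by
      nth_rewrite 2 [hval]
      exact dvd_mul_of_dvd_left (Int.natCast_dvd_natCast.2 hfac) _
    have hdvd' : ((ψ φ φ).natAbs + 1) ∣ (ψ φ φ).natAbs := by
      have h3 := Int.natAbs_dvd_natAbs.2 hdvd
      rwa [Int.natAbs_natCast] at h3
    have := Nat.le_of_dvd (Int.natAbs_pos.2 hnz) hdvd'
    omega
end Lchoice



section spandec
variable {m : ℕ} {W : Set (Fin m → ℕ)}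

lemma nstar_toInt_mem_span {u : Fin m → ℕ} (hu : u ∈ nstar W) :
    toInt u ∈ Submodule.span ℤ (toInt '' W) := by
  induction hu using AddSubmonoid.closure_induction with
  | mem g hg => exact Submodule.subset_span ⟨g, hg, rfl⟩
  | zero =>
    have : toInt (0 : Fin m → ℕ) = 0 := by funext i; simp [toInt]
    rw [this]; exact Submodule.zero_mem _
  | add a b _ _ iha ihb => rw [toInt_add]; exact Submodule.add_mem _ iha ihb

lemma span_toInt_decomp {σ : Fin m → ℤ} (h : σ ∈ Submodule.span ℤ (toInt '' W)) :
    ∃ w₁ ∈ nstar W, ∃ w₂ ∈ nstar W, σ = toInt w₁ - toInt w₂ := by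
  induction h using Submodule.span_induction with
  | mem x hx =>
    obtain ⟨w, hw, rfl⟩ := hx
    exact ⟨w, AddSubmonoid.subset_closure hw, 0, (AddSubmonoid.closure W).zero_mem,
      by funext i; simp [toInt]⟩
  | zero => exact ⟨0, (AddSubmonoid.closure W).zero_mem, 0, (AddSubmonoid.closure W).zero_mem,
      by funext i; simp [toInt]⟩
  | add a b _ _ iha ihb =>
    obtain ⟨w₁, h1, w₂, h2, rfl⟩ := iha
    obtain ⟨w₃, h3, w₄, h4, rfl⟩ := ihb
    refine ⟨w₁ + w₃, (AddSubmonoid.closure W).add_mem h1 h3,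
      w₂ + w₄, (AddSubmonoid.closure W).add_mem h2 h4, ?_⟩
    rw [toInt_add, toInt_add]; ring
  | smul z a _ iha =>
    obtain ⟨w₁, h1, w₂, h2, rfl⟩ := iha
    rcases z.eq_nat_or_neg with ⟨n, rfl | rfl⟩
    · refine ⟨n • w₁, (AddSubmonoid.closure W).nsmul_mem h1 n,
        n • w₂, (AddSubmonoid.closure W).nsmul_mem h2 n, ?_⟩
      rw [toInt_nsmul, toInt_nsmul]; module
    · refine ⟨n • w₂, (AddSubmonoid.closure W).nsmul_mem h2 n,
        n • w₁, (AddSubmonoid.closure W).nsmul_mem h1 n, ?_⟩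
      rw [toInt_nsmul, toInt_nsmul]; module
end spandec

section minimal
variable {σ : Type*} [Fintype σ]

lemma exists_minimal_le (Sol : Set (σ → ℕ)) :
    ∀ (n : ℕ) (f : σ → ℕ), (∑ i, f i ≤ n) → f ∈ Sol →
      ∃ g ∈ Sol, g ≤ f ∧ ∀ g' ∈ Sol, g' ≤ g → g' = g := by
  intro n
  induction n with
  | zero =>
    intro f hsum hf
    have hf0 : ∀ i, f i = 0 := by
      intro i
      have h2 : f i ≤ ∑ j, f j := Finset.single_le_sum (f := f) (fun i _ => Nat.zero_le _)
        (Finset.mem_univ i)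
      omega
    refine ⟨f, hf, le_refl _, ?_⟩
    intro g' hg' hle
    funext i
    have h2 : g' i ≤ f i := hle i
    have h3 := hf0 i
    omega
  | succ n ih =>
    intro f hsum hf
    by_cases h : ∀ g' ∈ Sol, g' ≤ f → g' = f
    · exact ⟨f, hf, le_refl _, h⟩
    · push_neg at h
      obtain ⟨g', hg', hle, hne⟩ := h
      have hlt : ∑ i, g' i < ∑ i, f i := by
        have hex : ∃ i, g' i < f i := by
          by_contra hc
          push_neg at hc
          exact hne (funext fun i => le_antisymm (hle i) (hc i))
        obtain ⟨i, hi⟩ := hex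
        exact Finset.sum_lt_sum (fun j _ => hle j) ⟨i, Finset.mem_univ i, hi⟩
      obtain ⟨g, hg, hgle, hmin⟩ := ih g' (by omega) hg'
      exact ⟨g, hg, le_trans hgle hle, hmin⟩

lemma minimal_set_finite (Sol : Set (σ → ℕ)) :
    {g | g ∈ Sol ∧ ∀ g' ∈ Sol, g' ≤ g → g' = g}.Finite := by
  set Mn := {g | g ∈ Sol ∧ ∀ g' ∈ Sol, g' ≤ g → g' = g} with hMn
  by_contra h
  have hinf : Mn.Infinite := h
  obtain e := hinf.natEmbedding
  have hpwo : Mn.IsPWO := Set.isPWO_of_wellQuasiOrderedLE Mn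
  obtain ⟨i, j, hij, hle⟩ := hpwo (fun n => e n)
  have h1 := ((e j).2).2 (e i) ((e i).2).1 hle
  have : (e i : Mn) = (e j : Mn) := Subtype.ext h1
  exact (Nat.ne_of_lt hij) (e.injective this)
end minimal



section recz
variable {m : ℕ}

/-- class map for threshold `N₀` and period `L` -/
def cls (N₀ L n : ℕ) : ℕ := if n < N₀ then n else N₀ + n % L

lemma cls_add_period (N₀ L n : ℕ) (hn : N₀ ≤ n) : cls N₀ L (n + L) = cls N₀ L n := by
  unfold cls
  rw [if_neg (by omega), if_neg (by omega), Nat.add_mod_right]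

lemma cls_lt (N₀ L n : ℕ) (hL : 0 < L) : cls N₀ L n < N₀ + L := by
  unfold cls
  split
  · omega
  · have := Nat.mod_lt n hL
    omega

lemma cls_eq_cases {N₀ L x y : ℕ} (h : cls N₀ L x = cls N₀ L y) :
    x = y ∨ (N₀ ≤ x ∧ N₀ ≤ y ∧ x % L = y % L) := by
  unfold cls at h
  by_cases hx : x < N₀ <;> by_cases hy : y < N₀
  · rw [if_pos hx, if_pos hy] at h; exact Or.inl h
  · rw [if_pos hx, if_neg hy] at h; omega
  · rw [if_neg hx, if_pos hy] at h; omega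
  · rw [if_neg hx, if_neg hy] at h; right; omega

lemma saturation_recognizable (R : Set (Fin m → ℕ)) (N₀ L : ℕ) (hL : 0 < L) :
    Recognizable {y : Fin m → ℕ | ∃ x, x ∈ R ∧ ∀ i, cls N₀ L (x i) = cls N₀ L (y i)} := by
  classical
  set K : Set (Fin m → ℕ) := (fun x => fun i => cls N₀ L (x i)) '' R with hK
  have hKfin : K.Finite := by
    apply Set.Finite.subset (Set.Finite.pi (fun i : Fin m => Set.finite_Iio (N₀ + L)))
    rintro t ⟨x, _, rfl⟩
    intro i _
    exact cls_lt N₀ L (x i) hL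
  set Kf : Finset (Fin m → ℕ) := hKfin.toFinset with hKf
  refine ⟨Kf.card, fun j i => {nn | cls N₀ L nn = (Kf.equivFin.symm j).1 i}, ?_, ?_⟩
  · intro j i
    refine ⟨N₀, L, hL, fun n hn => ?_⟩
    simp only [Set.mem_setOf_eq]
    rw [cls_add_period N₀ L n hn]
  · ext y
    simp only [Set.mem_setOf_eq, Set.mem_iUnion]
    constructor
    · rintro ⟨x, hxR, hxy⟩
      have htK : (fun i => cls N₀ L (x i)) ∈ Kf := hKfin.mem_toFinset.2 ⟨x, hxR, rfl⟩
      refine ⟨Kf.equivFin ⟨_, htK⟩, ?_⟩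
      intro i
      simp only [Set.mem_setOf_eq, Equiv.symm_apply_apply]
      exact (hxy i).symm
    · rintro ⟨j, hj⟩
      have hmem : ((Kf.equivFin.symm j) : Fin m → ℕ) ∈ K :=
        hKfin.mem_toFinset.1 (Kf.equivFin.symm j).2
      obtain ⟨x, hxR, hpat⟩ := hmem
      refine ⟨x, hxR, fun i => ?_⟩
      have h1 := hj i
      have h1' : cls N₀ L (y i) = (Kf.equivFin.symm j).1 i := h1
      rw [h1', ← hpat]
end recz



section cascade
variable {m : ℕ}

/-- counting lemma: a big coordinate forces a generator with a big count. -/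
lemma exists_big_gen (Ufin : Finset (Fin m → ℕ)) (CU : ℕ)
    (hCU : ∀ g ∈ Ufin, ∀ i, g i ≤ CU)
    (l : Multiset (Fin m → ℕ)) (hl : ∀ g ∈ l, g ∈ Ufin)
    (i : Fin m) (T : ℕ) (hbig : Ufin.card * CU * T < l.sum i) :
    ∃ g ∈ l, g i ≠ 0 ∧ T < l.count g := by
  by_contra hc
  push_neg at hc
  have hsum : l.sum i = ∑ g ∈ l.toFinset, l.count g * g i := by
    rw [Finset.sum_multiset_count l]
    rw [Finset.sum_apply]
    apply Finset.sum_congr rfl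
    intro g _
    simp [Pi.smul_apply]
  have hbound : ∀ g ∈ l.toFinset, l.count g * g i ≤ CU * T := by
    intro g hg
    have hgl : g ∈ l := Multiset.mem_toFinset.1 hg
    by_cases hgi : g i = 0
    · simp [hgi]
    · have h1 : l.count g ≤ T := hc g hgl hgi
      have h2 : g i ≤ CU := hCU g (hl g hgl) i
      calc l.count g * g i ≤ T * CU := Nat.mul_le_mul h1 h2
        _ = CU * T := Nat.mul_comm _ _
  have hcard : l.toFinset.card ≤ Ufin.card := by
    apply Finset.card_le_card
    intro g hg
    exact hl g (Multiset.mem_toFinset.1 hg)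
  have : l.sum i ≤ l.toFinset.card * (CU * T) := by
    rw [hsum]
    calc ∑ g ∈ l.toFinset, l.count g * g i ≤ ∑ _g ∈ l.toFinset, CU * T :=
          Finset.sum_le_sum hbound
      _ = l.toFinset.card * (CU * T) := by rw [Finset.sum_const, smul_eq_mul]
  have hfin2 : l.sum i ≤ Ufin.card * CU * T := by
    calc l.sum i ≤ l.toFinset.card * (CU * T) := this
      _ ≤ Ufin.card * (CU * T) := Nat.mul_le_mul_right _ hcard
      _ = Ufin.card * CU * T := by ring
  exact absurd (lt_of_lt_of_le hbig hfin2) (lt_irrefl _)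

lemma term_le_sum (l : Multiset (Fin m → ℕ)) (g : Fin m → ℕ) (hg : g ∈ l) (j : Fin m) :
    l.count g * g j ≤ l.sum j := by
  have hsum : l.sum j = ∑ h ∈ l.toFinset, l.count h * h j := by
    rw [Finset.sum_multiset_count l, Finset.sum_apply]
    apply Finset.sum_congr rfl
    intro h _
    simp [Pi.smul_apply]
  rw [hsum]
  exact Finset.single_le_sum (f := fun h => l.count h * h j)
    (fun h _ => Nat.zero_le _) (Multiset.mem_toFinset.2 hg)

lemma cascade {U V : Set (Fin m → ℕ)} {Jc : Set (Fin m)}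
    (hJc : ∀ j, StronglyUnbounded U V j → j ∈ Jc)
    (Ufin Vfin : Finset (Fin m → ℕ)) (hUfin : ↑Ufin ⊆ U) (hVfin : ↑Vfin ⊆ V)
    (CU CV MA MB : ℕ)
    (hCU : ∀ g ∈ Ufin, ∀ i, g i ≤ CU) (hCV : ∀ g ∈ Vfin, ∀ i, g i ≤ CV)
    (lu lv : Multiset (Fin m → ℕ)) (hlu : ∀ g ∈ lu, g ∈ Ufin) (hlv : ∀ g ∈ lv, g ∈ Vfin)
    (a b x y : Fin m → ℕ) (ha : ∀ i, a i ≤ MA) (hb : ∀ i, b i ≤ MB)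
    (hx : ∀ i, x i = a i + lu.sum i) (hy : ∀ i, y i = b i + lv.sum i)
    (Nk : ℕ → ℕ)
    (hNk : ∀ k, Nk (k+1) = (Ufin.card * CU + Vfin.card * CV + MA + MB + 2) * (Nk k + 1))
    (hrel : ∀ i, x i = y i ∨ (Nk (m+1) ≤ x i ∧ Nk (m+1) ≤ y i)) :
    ∀ i, x i ≠ y i → i ∈ Jc := by
  set E := Ufin.card * CU + Vfin.card * CV + MA + MB + 2 with hE
  have hE2 : 2 ≤ E := by rw [hE]; omega
  have hstep : ∀ k, Nk k ≤ Nk (k+1) := by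
    intro k
    rw [hNk k]
    calc Nk k ≤ Nk k + 1 := by omega
      _ ≤ E * (Nk k + 1) := Nat.le_mul_of_pos_left _ (by omega)
  have hNmono' : Monotone Nk := monotone_nat_of_le_succ hstep
  have hNmono : ∀ k k', k ≤ k' → Nk k ≤ Nk k' := fun k k' h => hNmono' h
  -- the chain of threshold sets
  set C : ℕ → Finset (Fin m) :=
    fun k => Finset.univ.filter (fun i => Nk (m+1-k) ≤ x i ∧ Nk (m+1-k) ≤ y i) with hC
  have hCmem : ∀ k i, i ∈ C k ↔ (Nk (m+1-k) ≤ x i ∧ Nk (m+1-k) ≤ y i) := by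
    intro k i; simp [hC]
  have hCmono : ∀ k k', k ≤ k' → C k ⊆ C k' := by
    intro k k' hkk i hi
    rw [hCmem] at hi ⊢
    have := hNmono (m+1-k') (m+1-k) (by omega)
    omega
  have hpigeon : ∃ k, k ≤ m ∧ C k = C (k+1) := by
    by_contra hall
    push_neg at hall
    have hcard : ∀ k, k ≤ m + 1 → k ≤ (C k).card := by
      intro k
      induction k with
      | zero => intro _; omega
      | succ n ihn =>
        intro hn
        have h1 : C n ⊂ C (n+1) :=
          lt_of_le_of_ne (hCmono n (n+1) (by omega)) (hall n (by omega))
        have h2 := Finset.card_lt_card h1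
        have h3 := ihn (by omega)
        omega
    have h4 := hcard (m+1) (le_refl _)
    have h5 : (C (m+1)).card ≤ m := by
      have := Finset.card_le_card (Finset.subset_univ (C (m+1)))
      simpa using this
    omega
  obtain ⟨k, hkm, hCeq⟩ := hpigeon
  -- for each big coordinate, a generator supported inside C k
  have hgenU : ∀ i ∈ C k, ∃ g, g ∈ Ufin ∧ g i ≠ 0 ∧ (∀ j, g j ≠ 0 → j ∈ C k) ∧ g ∈ lu := by
    intro i hi
    have hxi : Nk (m+1-k) ≤ x i := ((hCmem k i).1 hi).1
    have hui : Ufin.card * CU * Nk (m-k) < lu.sum i := by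
      have h1 : Nk (m+1-k) = E * (Nk (m-k) + 1) := by
        have : m+1-k = (m-k)+1 := by omega
        rw [this, hNk]
      have h2 : x i = a i + lu.sum i := hx i
      have h3 : a i ≤ MA := ha i
      have e1 : Ufin.card * CU ≤ E := by rw [hE]; omega
      have e2 : MA + 2 ≤ E := by rw [hE]; omega
      have h4 : (Ufin.card * CU) * Nk (m-k) + MA + 1 ≤ E * (Nk (m-k) + 1) := by
        have e3 := Nat.mul_le_mul_right (Nk (m-k)) e1
        calc (Ufin.card * CU) * Nk (m-k) + MA + 1 ≤ E * Nk (m-k) + E := by omega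
          _ = E * (Nk (m-k) + 1) := by ring
      omega
    obtain ⟨g, hgl, hgi, hcount⟩ := exists_big_gen Ufin CU hCU lu hlu i (Nk (m-k)) hui
    refine ⟨g, hlu g hgl, hgi, ?_, hgl⟩
    intro j hgj
    have hterm := term_le_sum lu g hgl j
    have huj : Nk (m-k) < lu.sum j := by
      have : 1 ≤ g j := Nat.one_le_iff_ne_zero.2 hgj
      nlinarith
    have hxj : Nk (m-k) < x j := by
      have := hx j; omega
    have hyj : Nk (m-k) ≤ y j := by
      rcases hrel j with h | h
      · omega
      · have := hNmono (m-k) (m+1) (by omega); omega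
    have : j ∈ C (k+1) := by
      rw [hCmem]
      have : m+1-(k+1) = m-k := by omega
      rw [this]
      omega
    rwa [← hCeq] at this
  have hgenV : ∀ i ∈ C k, ∃ g, g ∈ Vfin ∧ g i ≠ 0 ∧ (∀ j, g j ≠ 0 → j ∈ C k) ∧ g ∈ lv := by
    intro i hi
    have hxi : Nk (m+1-k) ≤ y i := ((hCmem k i).1 hi).2
    have hui : Vfin.card * CV * Nk (m-k) < lv.sum i := by
      have h1 : Nk (m+1-k) = E * (Nk (m-k) + 1) := by
        have : m+1-k = (m-k)+1 := by omega
        rw [this, hNk]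
      have h2 : y i = b i + lv.sum i := hy i
      have h3 : b i ≤ MB := hb i
      have e1 : Vfin.card * CV ≤ E := by rw [hE]; omega
      have e2 : MB + 2 ≤ E := by rw [hE]; omega
      have h4 : (Vfin.card * CV) * Nk (m-k) + MB + 1 ≤ E * (Nk (m-k) + 1) := by
        have e3 := Nat.mul_le_mul_right (Nk (m-k)) e1
        calc (Vfin.card * CV) * Nk (m-k) + MB + 1 ≤ E * Nk (m-k) + E := by omega
          _ = E * (Nk (m-k) + 1) := by ring
      omega
    obtain ⟨g, hgl, hgi, hcount⟩ := exists_big_gen Vfin CV hCV lv hlv i (Nk (m-k)) hui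
    refine ⟨g, hlv g hgl, hgi, ?_, hgl⟩
    intro j hgj
    have hterm := term_le_sum lv g hgl j
    have huj : Nk (m-k) < lv.sum j := by
      have : 1 ≤ g j := Nat.one_le_iff_ne_zero.2 hgj
      nlinarith
    have hyj : Nk (m-k) < y j := by
      have := hy j; omega
    have hxj : Nk (m-k) ≤ x j := by
      rcases hrel j with h | h
      · omega
      · have := hNmono (m-k) (m+1) (by omega); omega
    have : j ∈ C (k+1) := by
      rw [hCmem]
      have : m+1-(k+1) = m-k := by omega
      rw [this]
      omega
    rwa [← hCeq] at this
  -- choose generators and build the witnesses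
  have hgU : ∀ i : Fin m, ∃ g : Fin m → ℕ, i ∈ C k →
      (g ∈ Ufin ∧ g i ≠ 0 ∧ (∀ j, g j ≠ 0 → j ∈ C k)) := by
    intro i
    by_cases hi : i ∈ C k
    · obtain ⟨g, h1, h2, h3, _⟩ := hgenU i hi
      exact ⟨g, fun _ => ⟨h1, h2, h3⟩⟩
    · exact ⟨0, fun h => absurd h hi⟩
  have hgV : ∀ i : Fin m, ∃ g : Fin m → ℕ, i ∈ C k →
      (g ∈ Vfin ∧ g i ≠ 0 ∧ (∀ j, g j ≠ 0 → j ∈ C k)) := by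
    intro i
    by_cases hi : i ∈ C k
    · obtain ⟨g, h1, h2, h3, _⟩ := hgenV i hi
      exact ⟨g, fun _ => ⟨h1, h2, h3⟩⟩
    · exact ⟨0, fun h => absurd h hi⟩
  choose gU hgUp using hgU
  choose gV hgVp using hgV
  set p : Fin m → ℕ := ∑ i ∈ C k, gU i with hp
  set q : Fin m → ℕ := ∑ i ∈ C k, gV i with hq
  have hpU : p ∈ nstar U :=
    (AddSubmonoid.closure U).sum_mem fun i hi =>
      AddSubmonoid.subset_closure (hUfin (hgUp i hi).1)
  have hqV : q ∈ nstar V :=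
    (AddSubmonoid.closure V).sum_mem fun i hi =>
      AddSubmonoid.subset_closure (hVfin (hgVp i hi).1)
  have hsuppp : ∀ i, p i ≠ 0 ↔ i ∈ C k := by
    intro i
    rw [hp]
    rw [Finset.sum_apply]
    constructor
    · intro hne
      obtain ⟨j, hj, hji⟩ : ∃ j ∈ C k, gU j i ≠ 0 := by
        by_contra hcon
        push_neg at hcon
        exact hne (Finset.sum_eq_zero hcon)
      exact (hgUp j hj).2.2 i hji
    · intro hi
      intro h0
      exact (hgUp i hi).2.1 (Finset.sum_eq_zero_iff.1 h0 i hi)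
  have hsuppq : ∀ i, q i ≠ 0 ↔ i ∈ C k := by
    intro i
    rw [hq]
    rw [Finset.sum_apply]
    constructor
    · intro hne
      obtain ⟨j, hj, hji⟩ : ∃ j ∈ C k, gV j i ≠ 0 := by
        by_contra hcon
        push_neg at hcon
        exact hne (Finset.sum_eq_zero hcon)
      exact (hgVp j hj).2.2 i hji
    · intro hi
      intro h0
      exact (hgVp i hi).2.1 (Finset.sum_eq_zero_iff.1 h0 i hi)
  have hsuppeq : supp p = supp q := by
    ext i
    show p i ≠ 0 ↔ q i ≠ 0
    rw [hsuppp, hsuppq]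
  -- conclude
  intro i hne
  rcases hrel i with h | h
  · exact absurd h hne
  have hi0 : i ∈ C 0 := by
    rw [hCmem]
    have : m + 1 - 0 = m + 1 := by omega
    rw [this]
    exact h
  have hik : i ∈ C k := hCmono 0 k (by omega) hi0
  apply hJc
  exact ⟨p, hpU, q, hqV, (hsuppp i).2 hik, hsuppeq⟩
end cascade
theorem intersection_nonempty_of_inseparable (m : ℕ)
    (A B U V : Set (Fin m → ℕ)) (hA : A.Finite) (hB : B.Finite)
    (hU : U.Finite) (hV : V.Finite)
    (J : Set (Fin m)) (hJ : J = {j | StronglyUnbounded U V j})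
    (hinsep : ¬ ∃ S : Set (Fin m → ℕ), Recognizable S ∧
        Set.image2 (· + ·) A (nstar U) ⊆ S ∧
        S ∩ Set.image2 (· + ·) B (nstar V) = ∅) :
    ({x : Fin m → ℤ | ∃ a ∈ A, ∃ u ∈ nstar U, ∃ w ∈ nstar (restrictTo U J),
        x = toInt a + toInt u - toInt w} ∩
     {x : Fin m → ℤ | ∃ b ∈ B, ∃ v ∈ nstar V, ∃ w ∈ nstar (restrictTo V J),
        x = toInt b + toInt v - toInt w}).Nonempty := by
  classical
  have hJw : ∀ j, j ∈ J → StronglyUnbounded U V j := by rw [hJ]; exact fun j h => h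
  have hJc : ∀ j, StronglyUnbounded U V j → j ∈ J := by rw [hJ]; exact fun j h => h
  set Ufin : Finset (Fin m → ℕ) := hU.toFinset with hUfdef
  set Vfin : Finset (Fin m → ℕ) := hV.toFinset with hVfdef
  set CU : ℕ := Ufin.sup (fun g => Finset.univ.sup g) with hCUdef
  set CV : ℕ := Vfin.sup (fun g => Finset.univ.sup g) with hCVdef
  set MA : ℕ := hA.toFinset.sup (fun a => Finset.univ.sup a) with hMAdef
  set MB : ℕ := hB.toFinset.sup (fun b => Finset.univ.sup b) with hMBdef
  set E : ℕ := Ufin.card * CU + Vfin.card * CV + MA + MB + 2 with hEdef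
  set Nk : ℕ → ℕ := fun k => Nat.rec 1 (fun _ acc => E * (acc + 1)) k with hNkdef
  have hNk : ∀ k, Nk (k+1) = E * (Nk k + 1) := fun k => rfl
  set Hsub : Submodule ℤ (Fin m → ℤ) :=
    Submodule.span ℤ ((toInt '' restrictTo U J) ∪ (toInt '' restrictTo V J)) with hHsubdef
  -- solution sets of the off-J linear system
  set valU : ((↥Ufin ⊕ ↥Vfin) → ℕ) → (Fin m → ℕ) :=
    fun f => ∑ g ∈ Ufin.attach, f (Sum.inl g) • (g : Fin m → ℕ) with hvalUdef
  set valV : ((↥Ufin ⊕ ↥Vfin) → ℕ) → (Fin m → ℕ) :=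
    fun f => ∑ g ∈ Vfin.attach, f (Sum.inr g) • (g : Fin m → ℕ) with hvalVdef
  set Sol : (Fin m → ℕ) → (Fin m → ℕ) → Set ((↥Ufin ⊕ ↥Vfin) → ℕ) :=
    fun a b => {f | ∀ i, i ∉ J → a i + valU f i = b i + valV f i} with hSoldef
  set Φ : Set (Fin m → ℤ) := ⋃ a ∈ A, ⋃ b ∈ B,
    (fun f => toInt a - toInt b + toInt (valU f) - toInt (valV f)) ''
      {g | g ∈ Sol a b ∧ ∀ g' ∈ Sol a b, g' ≤ g → g' = g} with hΦdef
  have hΦfin : Φ.Finite :=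
    hA.biUnion (fun a _ => hB.biUnion (fun b _ =>
      (minimal_set_finite (Sol a b)).image _))
  obtain ⟨L, hLpos, hLprop⟩ := exists_good_L Hsub Φ hΦfin
  set N₀ : ℕ := Nk (m+1) with hN₀def
  set R : Set (Fin m → ℕ) := Set.image2 (· + ·) A (nstar U) with hRdef
  set Ssep : Set (Fin m → ℕ) :=
    {y | ∃ x, x ∈ R ∧ ∀ i, cls N₀ L (x i) = cls N₀ L (y i)} with hSsepdef
  have hrec : Recognizable Ssep := saturation_recognizable R N₀ L hLpos
  have hRsub : R ⊆ Ssep := fun x hx => ⟨x, hx, fun i => rfl⟩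
  have hne : (Ssep ∩ Set.image2 (· + ·) B (nstar V)).Nonempty := by
    rcases Set.eq_empty_or_nonempty (Ssep ∩ Set.image2 (· + ·) B (nstar V)) with h | h
    · exact absurd ⟨Ssep, hrec, hRsub, h⟩ hinsep
    · exact h
  obtain ⟨y, hySsep, hyS'⟩ := hne
  obtain ⟨x, hxR, hcls⟩ := hySsep
  obtain ⟨a, haA, u, huU, hxau⟩ := hxR
  obtain ⟨b, hbB, v, hvV, hybv⟩ := hyS'
  obtain ⟨lu, hluU, hlusum⟩ := mem_nstar_iff.1 huU
  obtain ⟨lv, hlvV, hlvsum⟩ := mem_nstar_iff.1 hvV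
  have hluF : ∀ g ∈ lu, g ∈ Ufin := fun g hg => hU.mem_toFinset.2 (hluU g hg)
  have hlvF : ∀ g ∈ lv, g ∈ Vfin := fun g hg => hV.mem_toFinset.2 (hlvV g hg)
  have haMA : ∀ i, a i ≤ MA := fun i =>
    le_trans (Finset.le_sup (Finset.mem_univ i)) (Finset.le_sup (hA.mem_toFinset.2 haA))
  have hbMB : ∀ i, b i ≤ MB := fun i =>
    le_trans (Finset.le_sup (Finset.mem_univ i)) (Finset.le_sup (hB.mem_toFinset.2 hbB))
  have hCUb : ∀ g ∈ Ufin, ∀ i, g i ≤ CU := fun g hg i =>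
    le_trans (Finset.le_sup (Finset.mem_univ i)) (Finset.le_sup hg)
  have hCVb : ∀ g ∈ Vfin, ∀ i, g i ≤ CV := fun g hg i =>
    le_trans (Finset.le_sup (Finset.mem_univ i)) (Finset.le_sup hg)
  have hxi : ∀ i, x i = a i + lu.sum i := by
    intro i; rw [hlusum, ← hxau]; rfl
  have hyi : ∀ i, y i = b i + lv.sum i := by
    intro i; rw [hlvsum, ← hybv]; rfl
  have hrel : ∀ i, x i = y i ∨ (N₀ ≤ x i ∧ N₀ ≤ y i ∧ x i % L = y i % L) :=
    fun i => cls_eq_cases (hcls i)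
  have hrel' : ∀ i, x i = y i ∨ (Nk (m+1) ≤ x i ∧ Nk (m+1) ≤ y i) := by
    intro i
    rcases hrel i with h | h
    · exact Or.inl h
    · exact Or.inr ⟨h.1, h.2.1⟩
  have hDJ : ∀ i, x i ≠ y i → i ∈ J := by
    refine cascade hJc Ufin Vfin ?_ ?_ CU CV MA MB hCUb hCVb lu lv hluF hlvF
      a b x y haMA hbMB hxi hyi Nk (fun k => rfl) hrel'
    · intro g hg; exact hU.mem_toFinset.1 hg
    · intro g hg; exact hV.mem_toFinset.1 hg
  set d : Fin m → ℤ := toInt x - toInt y with hddef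
  have hdoff : ∀ i, i ∉ J → x i = y i := by
    intro i hi
    by_contra h
    exact hi (hDJ i h)
  have hdiv : ∀ i, (L:ℤ) ∣ d i := by
    intro i
    rcases hrel i with h | h
    · have : d i = 0 := by simp [hddef, toInt, h]
      rw [this]; exact dvd_zero _
    · have hmod : x i ≡ y i [MOD L] := h.2.2
      have hdvd : (L:ℤ) ∣ (y i : ℤ) - (x i : ℤ) := Nat.ModEq.dvd hmod
      have h2 : d i = -((y i : ℤ) - (x i : ℤ)) := by
        show (x i : ℤ) - (y i : ℤ) = _
        ring
      rw [h2]
      exact dvd_neg.mpr hdvd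
  -- decompose the pair along a minimal solution
  set f₀ : (↥Ufin ⊕ ↥Vfin) → ℕ :=
    fun s => Sum.rec (fun g => lu.count ↑g) (fun g => lv.count ↑g) s with hf₀def
  have hvalU₀ : valU f₀ = lu.sum := by
    rw [Finset.sum_multiset_count lu]
    rw [hvalUdef]
    simp only []
    rw [Finset.sum_attach Ufin (fun g => lu.count g • g)]
    refine (Finset.sum_subset ?_ ?_).symm
    · intro g hg; exact hluF g (Multiset.mem_toFinset.1 hg)
    · intro g _ hng
      have : g ∉ lu := fun hmem => hng (Multiset.mem_toFinset.2 hmem)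
      rw [Multiset.count_eq_zero_of_notMem this, zero_smul]
  have hvalV₀ : valV f₀ = lv.sum := by
    rw [Finset.sum_multiset_count lv]
    rw [hvalVdef]
    simp only []
    rw [Finset.sum_attach Vfin (fun g => lv.count g • g)]
    refine (Finset.sum_subset ?_ ?_).symm
    · intro g hg; exact hlvF g (Multiset.mem_toFinset.1 hg)
    · intro g _ hng
      have : g ∉ lv := fun hmem => hng (Multiset.mem_toFinset.2 hmem)
      rw [Multiset.count_eq_zero_of_notMem this, zero_smul]
  have hf₀Sol : f₀ ∈ Sol a b := by
    intro i hi
    rw [hvalU₀, hvalV₀]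
    rw [← hxi, ← hyi]
    exact hdoff i hi
  obtain ⟨f₁, hf₁Sol, hf₁le, hf₁min⟩ :=
    exists_minimal_le (Sol a b) (∑ s, f₀ s) f₀ (le_refl _) hf₀Sol
  set φ : Fin m → ℤ := toInt a - toInt b + toInt (valU f₁) - toInt (valV f₁) with hφdef
  have hφΦ : φ ∈ Φ := by
    rw [hΦdef]
    refine Set.mem_biUnion haA ?_
    refine Set.mem_biUnion hbB ?_
    exact ⟨f₁, ⟨hf₁Sol, hf₁min⟩, rfl⟩
  set f₂ : (↥Ufin ⊕ ↥Vfin) → ℕ := fun s => f₀ s - f₁ s with hf₂def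
  have hsplit : ∀ s, f₀ s = f₁ s + f₂ s := by
    intro s
    have h : f₁ s ≤ f₀ s := hf₁le s
    show f₀ s = f₁ s + (f₀ s - f₁ s)
    omega
  have hvalUsplit : valU f₀ = valU f₁ + valU f₂ := by
    rw [hvalUdef]
    simp only []
    calc ∑ g ∈ Ufin.attach, f₀ (Sum.inl g) • (g : Fin m → ℕ)
        = ∑ g ∈ Ufin.attach, (f₁ (Sum.inl g) • (g : Fin m → ℕ)
            + f₂ (Sum.inl g) • (g : Fin m → ℕ)) := by
          apply Finset.sum_congr rfl
          intro g _
          rw [hsplit (Sum.inl g), add_nsmul]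
      _ = _ := Finset.sum_add_distrib
  have hvalVsplit : valV f₀ = valV f₁ + valV f₂ := by
    rw [hvalVdef]
    simp only []
    calc ∑ g ∈ Vfin.attach, f₀ (Sum.inr g) • (g : Fin m → ℕ)
        = ∑ g ∈ Vfin.attach, (f₁ (Sum.inr g) • (g : Fin m → ℕ)
            + f₂ (Sum.inr g) • (g : Fin m → ℕ)) := by
          apply Finset.sum_congr rfl
          intro g _
          rw [hsplit (Sum.inr g), add_nsmul]
      _ = _ := Finset.sum_add_distrib
  have hvalUmem : ∀ f, valU f ∈ nstar U := by
    intro f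
    apply (AddSubmonoid.closure U).sum_mem
    intro g _
    exact (AddSubmonoid.closure U).nsmul_mem
      (AddSubmonoid.subset_closure (hU.mem_toFinset.1 g.2)) _
  have hvalVmem : ∀ f, valV f ∈ nstar V := by
    intro f
    apply (AddSubmonoid.closure V).sum_mem
    intro g _
    exact (AddSubmonoid.closure V).nsmul_mem
      (AddSubmonoid.subset_closure (hV.mem_toFinset.1 g.2)) _
  have hoff₂ : ∀ i, i ∉ J → valU f₂ i = valV f₂ i := by
    intro i hi
    have h0 := hf₀Sol i hi
    have h1 := hf₁Sol i hi
    have h2 : valU f₀ i = valU f₁ i + valU f₂ i := by rw [hvalUsplit]; rfl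
    have h3 : valV f₀ i = valV f₁ i + valV f₂ i := by rw [hvalVsplit]; rfl
    omega
  obtain ⟨hsuppu₂, hsuppv₂⟩ := key_supp hJw hJc (hvalUmem f₂) (hvalVmem f₂) hoff₂
  have hu₂r : valU f₂ ∈ nstar (restrictTo U J) := mem_nstar_restrict (hvalUmem f₂) hsuppu₂
  have hv₂r : valV f₂ ∈ nstar (restrictTo V J) := mem_nstar_restrict (hvalVmem f₂) hsuppv₂
  have hx' : toInt x = toInt a + toInt u := by rw [← hxau, toInt_add]
  have hy' : toInt y = toInt b + toInt v := by rw [← hybv, toInt_add]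
  have hu' : toInt u = toInt (valU f₁) + toInt (valU f₂) := by
    rw [← toInt_add, ← hvalUsplit, hvalU₀, hlusum]
  have hv' : toInt v = toInt (valV f₁) + toInt (valV f₂) := by
    rw [← toInt_add, ← hvalVsplit, hvalV₀, hlvsum]
  have hdφ : d - φ ∈ Hsub := by
    have h1 : d - φ = toInt (valU f₂) - toInt (valV f₂) := by
      rw [hddef, hφdef, hx', hy', hu', hv']
      ring
    rw [h1]
    apply Submodule.sub_mem
    · exact Submodule.span_mono Set.subset_union_left (nstar_toInt_mem_span hu₂r)
    · exact Submodule.span_mono Set.subset_union_right (nstar_toInt_mem_span hv₂r)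
  have hdH : d ∈ Hsub := hLprop φ hφΦ d hdφ hdiv
  rw [hHsubdef, Submodule.span_union, Submodule.mem_sup] at hdH
  obtain ⟨σ1, hσ1, σ2, hσ2, hsum12⟩ := hdH
  obtain ⟨w₁, hw₁, w₂, hw₂, hσ1eq⟩ := span_toInt_decomp hσ1
  obtain ⟨w₃, hw₃, w₄, hw₄, hσ2eq⟩ := span_toInt_decomp hσ2
  have hrU : restrictTo U J ⊆ U := fun g hg => hg.1
  have hrV : restrictTo V J ⊆ V := fun g hg => hg.1
  refine ⟨toInt x + toInt w₂ - toInt w₁, ⟨a, haA, u + w₂,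
    add_mem_nstar huU (nstar_mono hrU hw₂), w₁, hw₁, ?_⟩,
    ⟨b, hbB, v + w₃, add_mem_nstar hvV (nstar_mono hrV hw₃), w₄, hw₄, ?_⟩⟩
  · rw [toInt_add, hx']; ring
  · have hkey : toInt x - toInt y = (toInt w₁ - toInt w₂) + (toInt w₃ - toInt w₄) := by
      rw [← hσ1eq, ← hσ2eq, hsum12]
    rw [toInt_add]
    linear_combination hkey + hy'
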